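/- Consider the linear system ẋ(t) = A x(t) + B w(t) with A ∈ ℝ^{n×n}, B ∈ ℝ^{n×n_w}, x(0) ∈ [c_x(0) − p_x(0), c_x(0) + p_x(0)], and bounded measurable input w with w(τ) ∈ [c_w(τ) − p_w(τ), c_w(τ) + p_w(τ)] for all τ ≥ 0. Define c_x(t) = e^{At} c_x(0) + ∫₀ᵗ e^{A(t−τ)} B c_w(τ) dτ and p_x(t) = |e^{At}| p_x(0) + ∫₀ᵗ |e^{A(t−τ)} B| p_w(τ) dτ. Then for every t ≥ 0, every solution x satisfies c_x(t) − p_x(t) ≤ x(t) ≤ c_x(t) + p_x(t) componentwise, and [c_x(t) − p_x(t), c_x(t) + p_x(t)] is the tightest box containing the reachable set at time t. -/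

import Mathlib

noncomputable def entAbs {m n : ℕ} (A : Matrix (Fin m) (Fin n) ℝ) : Matrix (Fin m) (Fin n) ℝ :=
  Matrix.of fun i j => |A i j|

/-- The box `[a, b] = {x : a ≤ x ≤ b}` in `ℝⁿ` (componentwise). -/
def box {n : ℕ} (a b : Fin n → ℝ) : Set (Fin n → ℝ) := {x | ∀ i, a i ≤ x i ∧ x i ≤ b i}

/-- Reachable set at time `t` of `ẋ = Ax + Bw` (via the variation-of-constants formula),
over initial states in `[cx0 - px0, cx0 + px0]` and bounded measurable inputs
`w(τ) ∈ [cw(τ) - pw(τ), cw(τ) + pw(τ)]`. -/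
noncomputable def reach {n nw : ℕ} (A : Matrix (Fin n) (Fin n) ℝ) (B : Matrix (Fin n) (Fin nw) ℝ)
    (cx0 px0 : Fin n → ℝ) (cw pw : ℝ → Fin nw → ℝ) (t : ℝ) : Set (Fin n → ℝ) :=
  {x | ∃ x0 : Fin n → ℝ, ∃ w : ℝ → Fin nw → ℝ,
    x0 ∈ box (cx0 - px0) (cx0 + px0) ∧ (∀ i, Measurable fun τ => w τ i) ∧
    (∃ C, ∀ τ, ∀ i, |w τ i| ≤ C) ∧
    (∀ τ, 0 ≤ τ → w τ ∈ box (cw τ - pw τ) (cw τ + pw τ)) ∧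
    x = (NormedSpace.exp (t • A)).mulVec x0
        + ∫ τ in (0:ℝ)..t, (NormedSpace.exp ((t - τ) • A)).mulVec (B.mulVec (w τ))}

open MeasureTheory

section
attribute [local instance] Matrix.linftyOpNormedAddCommGroup Matrix.linftyOpNormedRing
  Matrix.linftyOpNormedAlgebra

lemma contExpEntry {n : ℕ} (A : Matrix (Fin n) (Fin n) ℝ) (t : ℝ) (i : Fin n) (j : Fin n) :
    Continuous fun τ : ℝ => NormedSpace.exp ((t - τ) • A) i j := by
  have h1 : Continuous fun τ : ℝ => NormedSpace.exp ((t - τ) • A) :=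
    NormedSpace.exp_continuous.comp (by fun_prop)
  exact (continuous_apply j).comp ((continuous_apply i).comp h1)
end

lemma contNmEntry {n nw : ℕ} (A : Matrix (Fin n) (Fin n) ℝ) (B : Matrix (Fin n) (Fin nw) ℝ)
    (t : ℝ) (i : Fin n) (j : Fin nw) :
    Continuous fun τ : ℝ => (NormedSpace.exp ((t - τ) • A) * B) i j := by
  simp only [Matrix.mul_apply]
  exact continuous_finset_sum _ fun k _ => (contExpEntry A t i k).mul continuous_const

noncomputable def sgn (m : ℝ) : ℝ := if m < 0 then -1 else 1

lemma mul_sgn (m : ℝ) : m * sgn m = |m| := by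
  unfold sgn; split_ifs with h
  · rw [abs_of_neg h]; ring
  · rw [abs_of_nonneg (not_lt.1 h)]; ring

lemma abs_sgn_le (m : ℝ) : |sgn m| ≤ 1 := by unfold sgn; split_ifs <;> simp

lemma measurable_sgn : Measurable sgn :=
  Measurable.ite (measurableSet_lt measurable_id measurable_const) measurable_const
    measurable_const

lemma II_mul {g u : ℝ → ℝ} (hg : Continuous g) (hu : Measurable u)
    {C : ℝ} (hC : ∀ τ, |u τ| ≤ C) (a b : ℝ) :
    IntervalIntegrable (fun τ => g τ * u τ) volume a b := by
  have hgi : IntervalIntegrable g volume a b := hg.intervalIntegrable a b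
  have h1 : (fun τ => g τ * u τ) = fun τ => u τ * g τ := by funext τ; ring
  rw [h1]
  exact ⟨hgi.1.bdd_mul hu.aestronglyMeasurable.restrict
      (ae_of_all _ fun x => by rw [Real.norm_eq_abs]; exact hC x),
    hgi.2.bdd_mul hu.aestronglyMeasurable.restrict
      (ae_of_all _ fun x => by rw [Real.norm_eq_abs]; exact hC x)⟩

lemma II_pi {n : ℕ} {f : ℝ → Fin n → ℝ} {a b : ℝ}
    (hm : ∀ i, Measurable fun τ => f τ i)
    (h : ∀ i, IntervalIntegrable (fun τ => f τ i) volume a b) :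
    IntervalIntegrable f volume a b := by
  have hfm : Measurable f := measurable_pi_lambda _ hm
  have key : ∀ x y : ℝ, (∀ i, IntegrableOn (fun τ => f τ i) (Set.Ioc x y)) →
      IntegrableOn f (Set.Ioc x y) := by
    intro x y hi
    refine Integrable.mono' (g := fun τ => ∑ i, |f τ i|)
      (integrable_finset_sum _ fun i _ => (hi i).abs) hfm.aestronglyMeasurable.restrict ?_
    filter_upwards with τ
    refine (pi_norm_le_iff_of_nonneg (Finset.sum_nonneg fun i _ => abs_nonneg _)).2 fun i => ?_
    rw [Real.norm_eq_abs]
    exact Finset.single_le_sum (f := fun i => |f τ i|) (fun i _ => abs_nonneg _)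
      (Finset.mem_univ i)
  exact ⟨key _ _ fun i => (h i).1, key _ _ fun i => (h i).2⟩

lemma integral_coord {n : ℕ} {f : ℝ → Fin n → ℝ} {a b : ℝ}
    (hf : IntervalIntegrable f volume a b) (i : Fin n) :
    (∫ τ in a..b, f τ) i = ∫ τ in a..b, f τ i :=
  (ContinuousLinearMap.intervalIntegral_comp_comm
    (ContinuousLinearMap.proj (R := ℝ) (φ := fun _ : Fin n => ℝ) i) hf).symm

lemma II_gen {nw : ℕ} (E : ℝ → Fin nw → ℝ) (hE : ∀ j, Continuous fun τ => E τ j)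
    (u : ℝ → Fin nw → ℝ) (hm : ∀ j, Measurable fun τ => u τ j) (C : ℝ)
    (hb : ∀ τ j, |u τ j| ≤ C) (a b : ℝ) :
    IntervalIntegrable (fun τ => ∑ j, E τ j * u τ j) volume a b := by
  have := IntervalIntegrable.sum (f := fun j τ => E τ j * u τ j) (μ := volume) (a := a) (b := b)
    Finset.univ (fun j _ => II_mul (hE j) (hm j) (fun τ => hb τ j) a b)
  have heq : (∑ j : Fin nw, fun τ => E τ j * u τ j) = fun τ => ∑ j, E τ j * u τ j := by
    funext τ; simp
  rwa [heq] at this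

lemma integral_mulVec_coord {n nw : ℕ} (A : Matrix (Fin n) (Fin n) ℝ)
    (B : Matrix (Fin n) (Fin nw) ℝ) (u : ℝ → Fin nw → ℝ)
    (hm : ∀ j, Measurable fun τ => u τ j) (C : ℝ) (hb : ∀ τ j, |u τ j| ≤ C) (t : ℝ)
    (i : Fin n) :
    (∫ τ in (0:ℝ)..t, (NormedSpace.exp ((t - τ) • A)).mulVec (B.mulVec (u τ))) i
      = ∫ τ in (0:ℝ)..t, ∑ j, (NormedSpace.exp ((t - τ) • A) * B) i j * u τ j := by
  have hv : (fun τ => (NormedSpace.exp ((t - τ) • A)).mulVec (B.mulVec (u τ)))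
      = fun τ (i' : Fin n) => ∑ j, (NormedSpace.exp ((t - τ) • A) * B) i' j * u τ j := by
    funext τ i'
    rw [Matrix.mulVec_mulVec]
    simp [Matrix.mulVec, dotProduct]
  rw [hv]
  exact integral_coord (II_pi
    (fun i' => Finset.measurable_sum _ fun j _ =>
      ((contNmEntry A B t i' j).measurable.mul (hm j)))
    (fun i' => II_gen _ (fun j => contNmEntry A B t i' j) u hm C hb 0 t)) i

lemma integral_entAbs_coord {n nw : ℕ} (A : Matrix (Fin n) (Fin n) ℝ)
    (B : Matrix (Fin n) (Fin nw) ℝ) (u : ℝ → Fin nw → ℝ)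
    (hm : ∀ j, Measurable fun τ => u τ j) (C : ℝ) (hb : ∀ τ j, |u τ j| ≤ C) (t : ℝ)
    (i : Fin n) :
    (∫ τ in (0:ℝ)..t, (entAbs (NormedSpace.exp ((t - τ) • A) * B)).mulVec (u τ)) i
      = ∫ τ in (0:ℝ)..t, ∑ j, |(NormedSpace.exp ((t - τ) • A) * B) i j| * u τ j := by
  have hv : (fun τ => (entAbs (NormedSpace.exp ((t - τ) • A) * B)).mulVec (u τ))
      = fun τ (i' : Fin n) => ∑ j, |(NormedSpace.exp ((t - τ) • A) * B) i' j| * u τ j := by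
    funext τ i'
    simp [entAbs, Matrix.mulVec, dotProduct]
  rw [hv]
  exact integral_coord (II_pi
    (fun i' => Finset.measurable_sum _ fun j _ =>
      ((contNmEntry A B t i' j).abs.measurable.mul (hm j)))
    (fun i' => II_gen _ (fun j => (contNmEntry A B t i' j).abs) u hm C hb 0 t)) i

noncomputable def wExt {n nw : ℕ} (A : Matrix (Fin n) (Fin n) ℝ) (B : Matrix (Fin n) (Fin nw) ℝ)
    (cw pw : ℝ → Fin nw → ℝ) (t : ℝ) (i : Fin n) (ε : ℝ) : ℝ → Fin nw → ℝ :=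
  fun τ j => cw τ j + ε * sgn ((NormedSpace.exp ((t - τ) • A) * B) i j) * pw τ j

lemma exists_extreme {n nw : ℕ} (A : Matrix (Fin n) (Fin n) ℝ) (B : Matrix (Fin n) (Fin nw) ℝ)
    (cx0 px0 : Fin n → ℝ) (hpx0 : ∀ i, 0 ≤ px0 i)
    (cw pw : ℝ → Fin nw → ℝ)
    (hcwmeas : ∀ i, Measurable fun τ => cw τ i) (hpwmeas : ∀ i, Measurable fun τ => pw τ i)
    (Cc : ℝ) (hCc : ∀ τ j, |cw τ j| ≤ Cc) (Cp : ℝ) (hCp : ∀ τ j, |pw τ j| ≤ Cp)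
    (hpw : ∀ τ, 0 ≤ τ → ∀ i, 0 ≤ pw τ i) (t : ℝ) (i : Fin n) (ε : ℝ) (hε : |ε| = 1) :
    ∃ x ∈ reach A B cx0 px0 cw pw t,
      x i = ((NormedSpace.exp (t • A)).mulVec cx0 i
          + ∫ τ in (0:ℝ)..t, ∑ j, (NormedSpace.exp ((t - τ) • A) * B) i j * cw τ j)
        + ε * ((entAbs (NormedSpace.exp (t • A))).mulVec px0 i
          + ∫ τ in (0:ℝ)..t, ∑ j, |(NormedSpace.exp ((t - τ) • A) * B) i j| * pw τ j) := by
  have hwεm : ∀ j, Measurable fun τ => wExt A B cw pw t i ε τ j := fun j =>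
    (hcwmeas j).add ((measurable_const.mul
      (measurable_sgn.comp (contNmEntry A B t i j).measurable)).mul (hpwmeas j))
  have h5 : ∀ τ j, |ε * sgn ((NormedSpace.exp ((t - τ) • A) * B) i j) * pw τ j|
      ≤ |pw τ j| := by
    intro τ j
    rw [abs_mul, abs_mul, hε, one_mul]
    exact mul_le_of_le_one_left (abs_nonneg _) (abs_sgn_le _)
  have hwεb : ∀ τ j, |wExt A B cw pw t i ε τ j| ≤ Cc + Cp := by
    intro τ j
    have h6 := abs_add_le (cw τ j)
      (ε * sgn ((NormedSpace.exp ((t - τ) • A) * B) i j) * pw τ j)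
    simp only [wExt]
    calc |cw τ j + ε * sgn ((NormedSpace.exp ((t - τ) • A) * B) i j) * pw τ j|
        ≤ |cw τ j| + |ε * sgn ((NormedSpace.exp ((t - τ) • A) * B) i j) * pw τ j| := h6
      _ ≤ Cc + Cp := by
          have := (h5 τ j).trans (hCp τ j)
          linarith [hCc τ j]
  refine ⟨_, ⟨fun j => cx0 j + ε * sgn (NormedSpace.exp (t • A) i j) * px0 j,
    wExt A B cw pw t i ε, ?_, hwεm, ⟨Cc + Cp, hwεb⟩, ?_, rfl⟩, ?_⟩
  · intro j
    have habs : |ε * sgn (NormedSpace.exp (t • A) i j) * px0 j| ≤ px0 j := by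
      rw [abs_mul, abs_mul, hε, one_mul, abs_of_nonneg (hpx0 j)]
      exact mul_le_of_le_one_left (hpx0 j) (abs_sgn_le _)
    have h7 := abs_le.1 habs
    constructor <;> simp only [Pi.sub_apply, Pi.add_apply] <;> linarith [h7.1, h7.2]
  · intro τ hτ j
    have h8 : |ε * sgn ((NormedSpace.exp ((t - τ) • A) * B) i j) * pw τ j| ≤ pw τ j := by
      refine (h5 τ j).trans ?_
      rw [abs_of_nonneg (hpw τ hτ j)]
    have h9 := abs_le.1 h8
    constructor <;> simp only [wExt, Pi.sub_apply, Pi.add_apply] <;> linarith [h9.1, h9.2]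
  · rw [Pi.add_apply, integral_mulVec_coord A B _ hwεm (Cc + Cp) hwεb t i]
    have hmv : (NormedSpace.exp (t • A)).mulVec
          (fun j => cx0 j + ε * sgn (NormedSpace.exp (t • A) i j) * px0 j) i
        = (NormedSpace.exp (t • A)).mulVec cx0 i
          + ε * (entAbs (NormedSpace.exp (t • A))).mulVec px0 i := by
      simp only [Matrix.mulVec, dotProduct, entAbs, Matrix.of_apply]
      rw [Finset.mul_sum, ← Finset.sum_add_distrib]
      refine Finset.sum_congr rfl fun j _ => ?_
      rw [← mul_sgn (NormedSpace.exp (t • A) i j)]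
      ring
    have hiv : (fun τ => ∑ j,
          (NormedSpace.exp ((t - τ) • A) * B) i j * wExt A B cw pw t i ε τ j)
        = fun τ => (∑ j, (NormedSpace.exp ((t - τ) • A) * B) i j * cw τ j)
          + ε * ∑ j, |(NormedSpace.exp ((t - τ) • A) * B) i j| * pw τ j := by
      funext τ
      rw [Finset.mul_sum, ← Finset.sum_add_distrib]
      refine Finset.sum_congr rfl fun j _ => ?_
      simp only [wExt]
      rw [← mul_sgn ((NormedSpace.exp ((t - τ) • A) * B) i j)]
      ring
    rw [hmv, hiv, intervalIntegral.integral_add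
      (II_gen _ (fun j => contNmEntry A B t i j) cw hcwmeas Cc hCc 0 t)
      ((II_gen _ (fun j => (contNmEntry A B t i j).abs) pw hpwmeas Cp hCp 0 t).const_mul ε),
      intervalIntegral.integral_const_mul]
    ring

theorem tightest_open_loop_estimator {n nw : ℕ}
    (A : Matrix (Fin n) (Fin n) ℝ) (B : Matrix (Fin n) (Fin nw) ℝ)
    (cx0 px0 : Fin n → ℝ) (hpx0 : ∀ i, 0 ≤ px0 i)
    (cw pw : ℝ → Fin nw → ℝ)
    (hcwmeas : ∀ i, Measurable fun τ => cw τ i) (hpwmeas : ∀ i, Measurable fun τ => pw τ i)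
    (hcwbdd : ∃ C, ∀ τ, ∀ i, |cw τ i| ≤ C) (hpwbdd : ∃ C, ∀ τ, ∀ i, |pw τ i| ≤ C)
    (hpw : ∀ τ, 0 ≤ τ → ∀ i, 0 ≤ pw τ i) :
    ∀ t : ℝ, 0 ≤ t →
      (reach A B cx0 px0 cw pw t ⊆
        box
          (((NormedSpace.exp (t • A)).mulVec cx0
              + ∫ τ in (0:ℝ)..t, (NormedSpace.exp ((t - τ) • A)).mulVec (B.mulVec (cw τ))) -
            ((entAbs (NormedSpace.exp (t • A))).mulVec px0
              + ∫ τ in (0:ℝ)..t, (entAbs (NormedSpace.exp ((t - τ) • A) * B)).mulVec (pw τ)))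
          (((NormedSpace.exp (t • A)).mulVec cx0
              + ∫ τ in (0:ℝ)..t, (NormedSpace.exp ((t - τ) • A)).mulVec (B.mulVec (cw τ))) +
            ((entAbs (NormedSpace.exp (t • A))).mulVec px0
              + ∫ τ in (0:ℝ)..t, (entAbs (NormedSpace.exp ((t - τ) • A) * B)).mulVec (pw τ)))) ∧
      ∀ a b : Fin n → ℝ, reach A B cx0 px0 cw pw t ⊆ box a b →
        box
          (((NormedSpace.exp (t • A)).mulVec cx0
              + ∫ τ in (0:ℝ)..t, (NormedSpace.exp ((t - τ) • A)).mulVec (B.mulVec (cw τ))) -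
            ((entAbs (NormedSpace.exp (t • A))).mulVec px0
              + ∫ τ in (0:ℝ)..t, (entAbs (NormedSpace.exp ((t - τ) • A) * B)).mulVec (pw τ)))
          (((NormedSpace.exp (t • A)).mulVec cx0
              + ∫ τ in (0:ℝ)..t, (NormedSpace.exp ((t - τ) • A)).mulVec (B.mulVec (cw τ))) +
            ((entAbs (NormedSpace.exp (t • A))).mulVec px0
              + ∫ τ in (0:ℝ)..t, (entAbs (NormedSpace.exp ((t - τ) • A) * B)).mulVec (pw τ)))
          ⊆ box a b := by
  intro t ht
  obtain ⟨Cc, hCc⟩ := hcwbdd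
  obtain ⟨Cp, hCp⟩ := hpwbdd
  have hCc' : ∀ τ j, |cw τ j| ≤ Cc := fun τ j => hCc τ j
  have hCp' : ∀ τ j, |pw τ j| ≤ Cp := fun τ j => hCp τ j
  have hIc := integral_mulVec_coord A B cw hcwmeas Cc hCc' t
  have hIp := integral_entAbs_coord A B pw hpwmeas Cp hCp' t
  have IIc : ∀ i, IntervalIntegrable
      (fun τ => ∑ j, (NormedSpace.exp ((t - τ) • A) * B) i j * cw τ j) volume 0 t :=
    fun i => II_gen _ (fun j => contNmEntry A B t i j) cw hcwmeas Cc hCc' 0 t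
  have IIp : ∀ i, IntervalIntegrable
      (fun τ => ∑ j, |(NormedSpace.exp ((t - τ) • A) * B) i j| * pw τ j) volume 0 t :=
    fun i => II_gen _ (fun j => (contNmEntry A B t i j).abs) pw hpwmeas Cp hCp' 0 t
  constructor
  · rintro x ⟨x0, w, hx0, hwm, ⟨Cw, hCw⟩, hwbox, rfl⟩ i
    have hCw' : ∀ τ j, |w τ j| ≤ Cw := fun τ j => hCw τ j
    have hIw := integral_mulVec_coord A B w hwm Cw hCw' t
    have IIw : ∀ i, IntervalIntegrable
        (fun τ => ∑ j, (NormedSpace.exp ((t - τ) • A) * B) i j * w τ j) volume 0 t :=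
      fun i => II_gen _ (fun j => contNmEntry A B t i j) w hwm Cw hCw' 0 t
    have IIwc : IntervalIntegrable
        (fun τ => ∑ j, (NormedSpace.exp ((t - τ) • A) * B) i j * (w τ j - cw τ j))
        volume 0 t :=
      II_gen _ (fun j => contNmEntry A B t i j) (fun τ j => w τ j - cw τ j)
        (fun j => (hwm j).sub (hcwmeas j)) (Cw + Cc)
        (fun τ j => by
          have h1 := abs_le.1 (hCw' τ j)
          have h2 := abs_le.1 (hCc' τ j)
          rw [abs_le]; constructor <;> linarith [h1.1, h1.2, h2.1, h2.2])
        0 t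
    simp only [Pi.sub_apply, Pi.add_apply, hIc, hIp, hIw]
    have h1 : (NormedSpace.exp (t • A)).mulVec x0 i
        - (NormedSpace.exp (t • A)).mulVec cx0 i
        = ∑ j, NormedSpace.exp (t • A) i j * (x0 j - cx0 j) := by
      simp [Matrix.mulVec, dotProduct, mul_sub, Finset.sum_sub_distrib]
    have h2 : (∫ τ in (0:ℝ)..t, ∑ j, (NormedSpace.exp ((t - τ) • A) * B) i j * w τ j)
        - (∫ τ in (0:ℝ)..t, ∑ j, (NormedSpace.exp ((t - τ) • A) * B) i j * cw τ j)
        = ∫ τ in (0:ℝ)..t,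
            ∑ j, (NormedSpace.exp ((t - τ) • A) * B) i j * (w τ j - cw τ j) := by
      rw [← intervalIntegral.integral_sub (IIw i) (IIc i)]
      congr 1; funext τ
      simp [mul_sub, Finset.sum_sub_distrib]
    have h3 : |∑ j, NormedSpace.exp (t • A) i j * (x0 j - cx0 j)|
        ≤ (entAbs (NormedSpace.exp (t • A))).mulVec px0 i := by
      have he : (entAbs (NormedSpace.exp (t • A))).mulVec px0 i
          = ∑ j, |NormedSpace.exp (t • A) i j| * px0 j := by
        simp [entAbs, Matrix.mulVec, dotProduct]
      rw [he]
      refine (Finset.abs_sum_le_sum_abs _ _).trans (Finset.sum_le_sum fun j _ => ?_)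
      rw [abs_mul]
      refine mul_le_mul_of_nonneg_left ?_ (abs_nonneg _)
      have hj1 := (hx0 j).1
      have hj2 := (hx0 j).2
      simp only [Pi.sub_apply, Pi.add_apply] at hj1 hj2
      rw [abs_le]; constructor <;> linarith
    have h4 : |∫ τ in (0:ℝ)..t,
          ∑ j, (NormedSpace.exp ((t - τ) • A) * B) i j * (w τ j - cw τ j)|
        ≤ ∫ τ in (0:ℝ)..t, ∑ j, |(NormedSpace.exp ((t - τ) • A) * B) i j| * pw τ j := by
      refine (intervalIntegral.abs_integral_le_integral_abs ht).trans ?_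
      refine intervalIntegral.integral_mono_on ht IIwc.abs (IIp i) fun τ hτ => ?_
      refine (Finset.abs_sum_le_sum_abs _ _).trans (Finset.sum_le_sum fun j _ => ?_)
      rw [abs_mul]
      refine mul_le_mul_of_nonneg_left ?_ (abs_nonneg _)
      have hj1 := (hwbox τ hτ.1 j).1
      have hj2 := (hwbox τ hτ.1 j).2
      simp only [Pi.sub_apply, Pi.add_apply] at hj1 hj2
      rw [abs_le]; constructor <;> linarith
    have h3' := abs_le.1 h3
    have h4' := abs_le.1 h4
    constructor <;> linarith [h1, h2, h3'.1, h3'.2, h4'.1, h4'.2]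
  · intro a b hab y hy i
    have hyi := hy i
    simp only [Pi.sub_apply, Pi.add_apply, hIc, hIp] at hyi
    obtain ⟨xp, hxp, hxpv⟩ := exists_extreme A B cx0 px0 hpx0 cw pw hcwmeas hpwmeas
      Cc hCc' Cp hCp' hpw t i 1 (by norm_num)
    obtain ⟨xm, hxm, hxmv⟩ := exists_extreme A B cx0 px0 hpx0 cw pw hcwmeas hpwmeas
      Cc hCc' Cp hCp' hpw t i (-1) (by norm_num)
    have hub := (hab hxp i).2
    have hlb := (hab hxm i).1
    rw [hxpv] at hub
    rw [hxmv] at hlb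
    exact ⟨by linarith [hyi.1], by linarith [hyi.2]⟩
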